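/- Let a, b > 0 with a > b and let F : (0,1) → ℝ, F(k) = −log(1−k) + ((a−b)/a)·log(a/(a−b) − k) + (b/a)·log k. Then for every k ∈ (0,1), F'(k) = b/((a−b)·k·(k−1)·(k − a/(a−b))) · ((a−b)/b) = 1/(k(1−k)((1−a/b)k + a/b)); consequently the inverse function k(x) = F⁻¹(x) satisfies k'(x) = k(x)(1−k(x))((1−a/b)k(x) + a/b). -/

import Mathlib

open Set

theorem stmt_3 (a b : ℝ) (hb : 0 < b) (hab : b < a)
    (F : ℝ → ℝ)
    (hF : ∀ k, F k = -Real.log (1 - k) + ((a - b) / a) * Real.log (a / (a - b) - k)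
        + (b / a) * Real.log k) :
    (∀ k ∈ Set.Ioo (0:ℝ) 1,
        HasDerivAt F (1 / (k * (1 - k) * ((1 - a / b) * k + a / b))) k) ∧
    (∀ K : ℝ → ℝ, (∀ x, K x ∈ Set.Ioo (0:ℝ) 1) → (∀ x, F (K x) = x) →
      Differentiable ℝ K →
      ∀ x, HasDerivAt K (K x * (1 - K x) * ((1 - a / b) * K x + a / b)) x) := by
  have ha : 0 < a := hb.trans hab
  have hab' : (0:ℝ) < a - b := by linarith
  have hpos : ∀ k ∈ Set.Ioo (0:ℝ) 1,
      0 < k * (1 - k) * ((1 - a / b) * k + a / b) := by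
    intro k hk
    obtain ⟨hk0, hk1⟩ := hk
    have h3 : (1 - a / b) * k + a / b = (a - (a - b) * k) / b := by
      field_simp; ring
    have hak : 0 < a - (a - b) * k := by nlinarith
    rw [h3]
    exact mul_pos (mul_pos hk0 (by linarith)) (div_pos hak hb)
  have hderiv : ∀ k ∈ Set.Ioo (0:ℝ) 1,
      HasDerivAt F (1 / (k * (1 - k) * ((1 - a / b) * k + a / b))) k := by
    intro k hk
    obtain ⟨hk0, hk1⟩ := hk
    have h1k : (0:ℝ) < 1 - k := by linarith
    have hak : 0 < a - (a - b) * k := by nlinarith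
    have hck : 0 < a / (a - b) - k := by
      have : a / (a - b) - k = (a - (a - b) * k) / (a - b) := by field_simp
      rw [this]; positivity
    have d1 : HasDerivAt (fun x : ℝ => 1 - x) (-1) k := by
      simpa using (hasDerivAt_id k).const_sub 1
    have d2 : HasDerivAt (fun x : ℝ => a / (a - b) - x) (-1) k := by
      simpa using (hasDerivAt_id k).const_sub (a / (a - b))
    have l1 : HasDerivAt (fun x : ℝ => Real.log (1 - x)) ((1 - k)⁻¹ * (-1)) k :=
      (Real.hasDerivAt_log h1k.ne').comp k d1
    have l2 : HasDerivAt (fun x : ℝ => Real.log (a / (a - b) - x))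
        ((a / (a - b) - k)⁻¹ * (-1)) k :=
      (Real.hasDerivAt_log hck.ne').comp k d2
    have l3 : HasDerivAt Real.log k⁻¹ k := Real.hasDerivAt_log hk0.ne'
    have lsum : HasDerivAt (fun x : ℝ => -Real.log (1 - x)
        + ((a - b) / a) * Real.log (a / (a - b) - x) + (b / a) * Real.log x)
        (-((1 - k)⁻¹ * (-1)) + ((a - b) / a) * ((a / (a - b) - k)⁻¹ * (-1))
          + (b / a) * k⁻¹) k :=
      (l1.neg.add (l2.const_mul _)).add (l3.const_mul _)
    have hFe : F = fun x : ℝ => -Real.log (1 - x)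
        + ((a - b) / a) * Real.log (a / (a - b) - x) + (b / a) * Real.log x :=
      funext hF
    rw [hFe]
    convert lsum using 1
    have h3 : (1 - a / b) * k + a / b = (a - (a - b) * k) / b := by
      field_simp; ring
    rw [h3]
    have hne : a - k * (a - b) ≠ 0 := by nlinarith [hak]
    field_simp
    ring
  refine ⟨hderiv, fun K hK hFK hKdiff x => ?_⟩
  have hd := hderiv (K x) (hK x)
  have hdp := hpos (K x) (hK x)
  have hKx := (hKdiff x).hasDerivAt
  have comp := hd.comp x hKx
  simp only [Function.comp_def, hFK] at comp
  have huniq := comp.unique (hasDerivAt_id x)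
  have hdk : deriv K x = K x * (1 - K x) * ((1 - a / b) * K x + a / b) := by
    rw [one_div, inv_mul_eq_div, div_eq_one_iff_eq hdp.ne'] at huniq
    exact huniq
  exact hdk ▸ hKx
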